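/- arXiv:1804.03582 — 3 statements merged into one kernel-verified Lean document; each statement's English description precedes it below -/
import Mathlib

section
/- Let N be a positive integer and let ℓ, m, n be integers with ℓ + m = n. Writing ℓ_i = ⌈ℓ/N⌉ if i < ℓ mod N and ⌊ℓ/N⌋ otherwise (and similarly for m and n), the components satisfy n_i = ℓ_i + m_{(i − (ℓ mod N)) mod N} for all 0 ≤ i < N, and n mod N = ((ℓ mod N) + (m mod N)) mod N. -/
/-- The `i`-th component of the tuple encoding `⟨k⟩_N`. -/
def tupleComp (N : ℕ) (k i : ℤ) : ℤ :=
  if i < k % N then ⌈(k : ℚ) / N⌉ else ⌊(k : ℚ) / N⌋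

lemma neg_ediv_of_emod_ne (N : ℕ) (hN : 0 < N) (k : ℤ) (hk : k % N ≠ 0) :
    (-k) / (N : ℤ) = -(k / N) - 1 := by
  have h1 : (0:ℤ) ≤ k % N := Int.emod_nonneg k (by exact_mod_cast hN.ne')
  have h2 : k % N < N := Int.emod_lt_of_pos k (by exact_mod_cast hN)
  have hk' : (N:ℤ) * (k / N) + k % N = k := Int.mul_ediv_add_emod k N
  have : (-k) = ((N:ℤ) - k % N) + (N:ℤ) * (-(k / N) - 1) := by linarith
  rw [this, Int.add_mul_ediv_left _ _ (by exact_mod_cast hN.ne' : (N:ℤ) ≠ 0),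
    Int.ediv_eq_zero_of_lt (by omega) (by omega), zero_add]

lemma tupleComp_eq (N : ℕ) (hN : 0 < N) (k i : ℤ) (hi : 0 ≤ i) :
    tupleComp N k i = if i < k % N then k / N + 1 else k / N := by
  unfold tupleComp
  by_cases hc : i < k % N
  · simp only [hc, if_true]
    have hk : k % N ≠ 0 := by omega
    have : ((k : ℚ) / N) = -((-k : ℤ) / (N:ℕ) : ℚ) := by push_cast; ring
    rw [this, Int.ceil_neg, Rat.floor_intCast_div_natCast, neg_ediv_of_emod_ne N hN k hk]
    ring
  · simp only [hc, if_false]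
    exact Rat.floor_intCast_div_natCast k N

theorem stmt2 (N : ℕ) (hN : 0 < N) (l m n : ℤ) (h : l + m = n) :
    (∀ i : ℤ, 0 ≤ i → i < N →
      tupleComp N n i = tupleComp N l i + tupleComp N m ((i - l % N) % N)) ∧
    n % N = (l % N + m % N) % N := by
  have hNz : (N:ℤ) ≠ 0 := by exact_mod_cast hN.ne'
  have hNpos : (0:ℤ) < N := by exact_mod_cast hN
  set a := l / N with ha
  set r := l % N with hr
  set b := m / N with hb
  set s := m % N with hs
  have hl : (N:ℤ) * a + r = l := Int.mul_ediv_add_emod l N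
  have hm : (N:ℤ) * b + s = m := Int.mul_ediv_add_emod m N
  have hr0 : 0 ≤ r := Int.emod_nonneg l hNz
  have hrN : r < N := Int.emod_lt_of_pos l hNpos
  have hs0 : 0 ≤ s := Int.emod_nonneg m hNz
  have hsN : s < N := Int.emod_lt_of_pos m hNpos
  have hmod : n % N = (r + s) % N := by rw [← h, Int.add_emod]
  have hnmod : n % N = if r + s < N then r + s else r + s - N := by
    rw [hmod]
    split_ifs with hc
    · exact Int.emod_eq_of_lt (by omega) hc
    · have h1 : (r + s) % N = (r + s - N) % N := by
        conv_lhs => rw [show r + s = (r + s - N) + (N:ℤ)*1 by ring]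
        rw [Int.add_mul_emod_self_left]
      rw [h1]; exact Int.emod_eq_of_lt (by omega) (by omega)
  have hndiv : n / N = if r + s < N then a + b else a + b + 1 := by
    have hn : (N:ℤ) * (n / N) + n % N = n := Int.mul_ediv_add_emod n N
    apply mul_left_cancel₀ hNz
    split_ifs with hc <;> rw [hnmod] at hn <;> simp [hc] at hn <;> linarith
  refine ⟨fun i hi0 hiN => ?_, by rw [hmod]⟩
  have hj0 : 0 ≤ (i - r) % N := Int.emod_nonneg _ hNz
  have hj : (i - r) % N = if i < r then i - r + N else i - r := by
    split_ifs with hc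
    · have h1 : (i - r) % N = (i - r + N) % N := by
        conv_lhs => rw [show i - r = (i - r + N) + (N:ℤ)*(-1) by ring]
        rw [Int.add_mul_emod_self_left]
      rw [h1]; exact Int.emod_eq_of_lt (by omega) (by omega)
    · exact Int.emod_eq_of_lt (by omega) (by omega)
  rw [tupleComp_eq N hN n i hi0, tupleComp_eq N hN l i hi0, tupleComp_eq N hN m _ hj0,
    ← hr, ← hs, ← ha, ← hb, hnmod, hndiv, hj]
  split_ifs <;> omega
end

section
/- Let A be a quasi-acyclic distributed automaton with k states running on a labeled directed path v_1 v_2 ⋯ v_n, with run ρ = (ρ_0, ρ_1, …) where ρ_{j+1}(v_i) = δ(ρ_j(v_{i−1}), ρ_j(v_i)) for i > 1 and ρ_{j+1}(v_1) = δ(⊥, ρ_j(v_1)). Then for each i ∈ {1, …, n} and each j > k·i, we have ρ_j(v_i) = ρ_{j−1}(v_i). In particular every node's state sequence is eventually constant. -/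
/-- A trace of a distributed automaton: a nonempty sequence of states with
adjacent states distinct and each step realized by the transition function. -/
def IsTrace {Q : Type*} (δ : Option Q → Q → Q) (l : List Q) : Prop :=
  l ≠ [] ∧ l.Chain' (fun a b => a ≠ b ∧ ∃ p : Option Q, δ p a = b)

/-- The synchronous run of a distributed automaton on a labeled directed path. -/
def daRun {A Q : Type*} (init : A → Q) (δ : Option Q → Q → Q) {n : ℕ}
    (labels : Fin n → A) : ℕ → Fin n → Q
  | 0, i => init (labels i)
  | j + 1, i =>
      δ (if i.1 = 0 then none
         else some (daRun init δ labels j ⟨i.1 - 1, Nat.lt_of_le_of_lt (Nat.sub_le _ _) i.2⟩))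
        (daRun init δ labels j i)

/-- An infinite walk in the state diagram yields infinitely many traces. -/
lemma walk_not_finite {Q : Type*} (δ : Option Q → Q → Q) (t : ℕ → Q)
    (h : ∀ x, t x ≠ t (x + 1) ∧ ∃ p : Option Q, δ p (t x) = t (x + 1)) :
    ¬ {l : List Q | IsTrace δ l}.Finite := by
  intro hfin
  have hinj : Function.Injective (fun m : ℕ => (List.range (m + 1)).map t) := by
    intro a b hab
    have := congrArg List.length hab
    simpa using this
  have hmem : ∀ m : ℕ, (List.range (m + 1)).map t ∈ {l : List Q | IsTrace δ l} := by
    intro m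
    refine ⟨by simp, ?_⟩
    show List.IsChain _ _
    rw [List.isChain_map]
    exact (List.isChain_range_succ _ m).mpr (fun x _ => h x)
  exact Set.infinite_of_injective_forall_mem hinj hmem hfin

lemma eventually_const {Q : Type*} (g : ℕ → Q) (T : ℕ)
    (h : ∀ u, T ≤ u → g (u + 1) = g u) : ∀ u, T ≤ u → g u = g T := by
  intro u hu
  induction u, hu using Nat.le_induction with
  | base => rfl
  | succ u hu ih => rw [h u hu, ih]

/-- If a node's input is constant from time `T` on, its state stabilizes by time `T + k`. -/
lemma const_input_stab {Q : Type*} [Fintype Q] {k : ℕ} (hk : Fintype.card Q = k)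
    (δ : Option Q → Q → Q) (hQA : {l : List Q | IsTrace δ l}.Finite)
    (S : ℕ → Q) (p : Option Q) (T : ℕ)
    (hrec : ∀ u, T ≤ u → S (u + 1) = δ p (S u)) :
    ∀ u, T + k ≤ u → S (u + 1) = S u := by
  have hex : ∃ t, T ≤ t ∧ t ≤ T + k ∧ S (t + 1) = S t := by
    by_contra hno
    push_neg at hno
    obtain ⟨x, y, hxy, hfe⟩ :=
      Fintype.exists_ne_map_eq_of_card_lt (fun z : Fin (k + 2) => S (T + z.1))
        (by simp [hk])
    -- get a < b with equal values
    obtain ⟨a, b, hab, hb, heq⟩ :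
        ∃ a b : ℕ, a < b ∧ b ≤ k + 1 ∧ S (T + a) = S (T + b) := by
      rcases Nat.lt_or_ge x.1 y.1 with hlt | hge
      · exact ⟨x.1, y.1, hlt, Nat.lt_succ_iff.mp y.2, hfe⟩
      · have hlt : y.1 < x.1 := lt_of_le_of_ne hge (fun hc => hxy (Fin.ext hc.symm))
        exact ⟨y.1, x.1, hlt, Nat.lt_succ_iff.mp x.2, hfe.symm⟩
    set d := b - a with hd
    have hdpos : 0 < d := by omega
    set w : ℕ → Q := fun z => S (T + a + z % d) with hw
    apply walk_not_finite δ w _ hQA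
    intro z
    have hr : z % d < d := Nat.mod_lt _ hdpos
    have hmod : (z + 1) % d = (z % d + 1) % d := (Nat.mod_add_mod z d 1).symm
    have hsucc : w (z + 1) = S (T + a + z % d + 1) := by
      show S (T + a + (z + 1) % d) = S (T + a + z % d + 1)
      rw [hmod]
      by_cases hcase : z % d + 1 = d
      · rw [hcase, Nat.mod_self]
        have : T + a + z % d + 1 = T + b := by omega
        rw [this, Nat.add_zero, heq]
      · rw [Nat.mod_eq_of_lt (by omega)]; congr 1
    have hidx1 : T ≤ T + a + z % d := by omega
    have hidx2 : T + a + z % d ≤ T + k := by omega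
    constructor
    · rw [hsucc]
      exact fun hc => hno _ hidx1 hidx2 hc.symm
    · exact ⟨p, by rw [hsucc]; exact (hrec _ hidx1).symm⟩
  obtain ⟨t, hTt, htk, hst⟩ := hex
  have hconst : ∀ u, t ≤ u → S u = S t := by
    intro u hu
    induction u, hu using Nat.le_induction with
    | base => rfl
    | succ u hu ih =>
      rw [hrec u (le_trans hTt hu), ih, ← hrec t hTt, hst]
  intro u hu
  rw [hconst (u + 1) (by omega), hconst u (by omega)]

lemma daRun_stab {A Q : Type*} [Fintype Q] {k : ℕ} (hk : Fintype.card Q = k)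
    (init : A → Q) (δ : Option Q → Q → Q)
    (hQA : {l : List Q | IsTrace δ l}.Finite)
    {n : ℕ} (labels : Fin n → A) :
    ∀ (m : ℕ) (i : Fin n), i.1 = m → ∀ u, k * (m + 1) ≤ u →
      daRun init δ labels (u + 1) i = daRun init δ labels u i := by
  intro m
  induction m with
  | zero =>
    intro i hi u hu
    refine const_input_stab hk δ hQA (fun j => daRun init δ labels j i) none 0 ?_ u (by omega)
    intro v _
    simp [daRun, hi]
  | succ m ih =>
    intro i hi u hu
    have hm : m < n := by omega
    set pred : Fin n := ⟨m, hm⟩ with hpred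
    have hpredconst : ∀ v, k * (m + 1) ≤ v →
        daRun init δ labels v pred = daRun init δ labels (k * (m + 1)) pred :=
      eventually_const _ _ (ih pred rfl)
    have hkm : k * (m + 1 + 1) = k * (m + 1) + k := by ring
    refine const_input_stab hk δ hQA (fun j => daRun init δ labels j i)
      (some (daRun init δ labels (k * (m + 1)) pred)) (k * (m + 1)) ?_ u (by omega)
    intro v hv
    have hne : ¬ (i.1 = 0) := by omega
    show daRun init δ labels (v + 1) i = _
    rw [show daRun init δ labels (v + 1) i =
        δ (if i.1 = 0 then none
           else some (daRun init δ labels v ⟨i.1 - 1, Nat.lt_of_le_of_lt (Nat.sub_le _ _) i.2⟩))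
          (daRun init δ labels v i) from rfl, if_neg hne]
    have hfin : (⟨i.1 - 1, Nat.lt_of_le_of_lt (Nat.sub_le _ _) i.2⟩ : Fin n) = pred :=
      Fin.ext (by simp [hi, hpred])
    rw [hfin, hpredconst v hv]

theorem stmt6 {A Q : Type*} [Fintype Q] (k : ℕ) (hk : Fintype.card Q = k)
    (init : A → Q) (δ : Option Q → Q → Q)
    (hQA : {l : List Q | IsTrace δ l}.Finite)
    {n : ℕ} (labels : Fin n → A) :
    ∀ (i : Fin n) (j : ℕ), k * (i.1 + 1) < j →
      daRun init δ labels j i = daRun init δ labels (j - 1) i := by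
  intro i j hj
  have h1 : j - 1 + 1 = j := by omega
  have := daRun_stab hk init δ hQA labels i.1 i rfl (j - 1) (by omega)
  rw [h1] at this
  exact this
end

section
/- Let A = (Q, λ, δ, F) be a distributed automaton whose history transition function δ̂ : (Q ∪ {⊥})^ω × Q → Q^ω is defined recursively by δ̂(p·π, q) = q · δ̂(π, δ(p, q)). If A is quasi-acyclic (every trace visits pairwise distinct states, and the set of traces is finite with maximum length T) and the input sequence π ∈ (Q ∪ {⊥})^ω is ultimately constant, then the output sequence δ̂(π, q) is ultimately constant for every q ∈ Q. -/
/-- The history transition function `δ̂`: `histOut δ π q n` is the `n`-th state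
of the node with initial state `q` whose predecessor's state sequence is `π`. -/
def histOut {Q : Type*} (δ : Option Q → Q → Q) (π : ℕ → Option Q) (q : Q) : ℕ → Q
  | 0 => q
  | n + 1 => δ (π n) (histOut δ π q n)

open scoped Classical in
/-- The list of distinct successive values taken by `x` up to time `n`. -/
noncomputable def traceList {Q : Type*} (x : ℕ → Q) : ℕ → List Q
  | 0 => [x 0]
  | n + 1 => if x (n + 1) = x n then traceList x n else traceList x n ++ [x (n + 1)]

lemma traceList_ne_nil {Q : Type*} (x : ℕ → Q) (n : ℕ) : traceList x n ≠ [] := by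
  induction n with
  | zero => simp [traceList]
  | succ n ih =>
    rw [traceList]
    split
    · exact ih
    · simp

lemma traceList_getLast? {Q : Type*} (x : ℕ → Q) (n : ℕ) :
    (traceList x n).getLast? = some (x n) := by
  induction n with
  | zero => simp [traceList]
  | succ n ih =>
    rw [traceList]
    split
    next h => rw [ih, h]
    next h => simp

lemma traceList_chain' {Q : Type*} (δ : Option Q → Q → Q) (π : ℕ → Option Q)
    (x : ℕ → Q) (hx : ∀ n, x (n + 1) = δ (π n) (x n)) (n : ℕ) :
    (traceList x n).Chain' (fun a b => a ≠ b ∧ ∃ p : Option Q, δ p a = b) := by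
  induction n with
  | zero => simp [traceList, List.Chain']
  | succ n ih =>
    rw [traceList]
    split
    · exact ih
    next h =>
      rw [List.Chain', List.isChain_append]
      refine ⟨ih, List.isChain_singleton _, ?_⟩
      intro a ha b hb
      rw [traceList_getLast? x n] at ha
      simp at ha hb
      subst ha; subst hb
      exact ⟨fun hh => h hh.symm, π n, (hx n).symm⟩

lemma traceList_length_mono {Q : Type*} (x : ℕ → Q) :
    Monotone fun n => (traceList x n).length := by
  apply monotone_nat_of_le_succ
  intro n
  rw [traceList]
  split
  · exact le_rfl
  · simp

lemma traceList_length_succ {Q : Type*} (x : ℕ → Q) (n : ℕ) (h : x (n + 1) ≠ x n) :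
    (traceList x (n + 1)).length = (traceList x n).length + 1 := by
  rw [traceList, if_neg h]
  simp

theorem stmt14 {Q : Type*} [Fintype Q] (δ : Option Q → Q → Q)
    (hQA : {l : List Q | IsTrace δ l}.Finite)
    (T : ℕ) (hT : ∀ l : List Q, IsTrace δ l → l.length ≤ T)
    (π : ℕ → Option Q) (hπ : ∃ (N : ℕ) (p : Option Q), ∀ n, N ≤ n → π n = p)
    (q : Q) :
    ∃ N : ℕ, ∀ n, N ≤ n → histOut δ π q n = histOut δ π q N := by
  set x : ℕ → Q := histOut δ π q with hxdef
  have hx : ∀ n, x (n + 1) = δ (π n) (x n) := fun n => rfl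
  have hbound : ∀ n, (traceList x n).length ≤ T := by
    intro n
    exact hT _ ⟨traceList_ne_nil x n, traceList_chain' δ π x hx n⟩
  -- eventually no changes
  have hstab : ∃ N, ∀ n, N ≤ n → x (n + 1) = x n := by
    by_contra hcon
    push_neg at hcon
    have key : ∀ k, ∃ n, k + 1 ≤ (traceList x n).length := by
      intro k
      induction k with
      | zero => exact ⟨0, by simp [traceList]⟩
      | succ k ih =>
        obtain ⟨n, hn⟩ := ih
        obtain ⟨m, hm, hne⟩ := hcon n
        refine ⟨m + 1, ?_⟩
        rw [traceList_length_succ x m hne]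
        have h2 : (traceList x n).length ≤ (traceList x m).length := traceList_length_mono x hm
        omega
    obtain ⟨n, hn⟩ := key T
    exact absurd (hbound n) (by omega)
  obtain ⟨N, hN⟩ := hstab
  refine ⟨N, fun n hn => ?_⟩
  induction n, hn using Nat.le_induction with
  | base => rfl
  | succ n hn ih => rw [hN n hn, ih]
end
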